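/- For nonnegative integers r₁, r₂, r₃, r₄, r₅, the integral over the unit 5-cube [0,1]⁵ of x₁^{r₁} x₂^{r₂} x₃^{r₃} x₄^{r₄} x₅^{r₅} / (1 - x₁x₂x₃x₄x₅) equals the sum over k ≥ 0 of 1/((k+r₁+1)(k+r₂+1)(k+r₃+1)(k+r₄+1)(k+r₅+1)). -/

import Mathlib

open MeasureTheory

lemma box_int (n : Fin 5 → ℕ) :
    ∫ x in (Set.univ.pi fun _ : Fin 5 => Set.Icc (0:ℝ) 1), ∏ i, x i ^ n i
      = ∏ i, (1:ℝ)/(n i + 1) := by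
  have hmeas : MeasurableSet (Set.univ.pi fun _ : Fin 5 => Set.Icc (0:ℝ) 1) :=
    MeasurableSet.univ_pi fun _ => measurableSet_Icc
  rw [← integral_indicator hmeas]
  have hind : ∀ x : Fin 5 → ℝ,
      (Set.univ.pi fun _ : Fin 5 => Set.Icc (0:ℝ) 1).indicator
        (fun x => ∏ i, x i ^ n i) x
      = ∏ i, (Set.Icc (0:ℝ) 1).indicator (fun t => t ^ n i) (x i) := by
    intro x
    by_cases hx : x ∈ Set.univ.pi fun _ : Fin 5 => Set.Icc (0:ℝ) 1
    · rw [Set.indicator_of_mem hx]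
      exact Finset.prod_congr rfl fun i _ =>
        (Set.indicator_of_mem (hx i (Set.mem_univ i)) _).symm
    · rw [Set.indicator_of_notMem hx]
      rw [Set.mem_univ_pi, not_forall] at hx; obtain ⟨i, hi⟩ := hx
      exact (Finset.prod_eq_zero (Finset.mem_univ i)
        (Set.indicator_of_notMem hi _)).symm
  simp_rw [hind]
  rw [integral_fintype_prod_volume_eq_prod
    (f := fun i t => (Set.Icc (0:ℝ) 1).indicator (fun s => s ^ n i) t)]
  refine Finset.prod_congr rfl fun i _ => ?_
  rw [integral_indicator measurableSet_Icc, MeasureTheory.integral_Icc_eq_integral_Ioc,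
    ← intervalIntegral.integral_of_le zero_le_one, integral_pow]
  norm_num

lemma summable_aux (r : Fin 5 → ℕ) :
    Summable fun k : ℕ => ∏ i, (1:ℝ) / ((r i + k : ℕ) + 1) := by
  have h5 : Summable fun k : ℕ => ((1:ℝ) / (k + 1)) ^ 5 := by
    have := (Real.summable_one_div_nat_pow (p := 5)).mpr (by norm_num)
    have h := (summable_nat_add_iff 1).mpr this
    simpa [div_pow] using h
  refine Summable.of_nonneg_of_le (fun k => ?_) (fun k => ?_) h5
  · exact Finset.prod_nonneg fun i _ => by positivity
  · calc ∏ i, (1:ℝ) / ((r i + k : ℕ) + 1)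
        ≤ ∏ i : Fin 5, (1:ℝ) / (k + 1) := by
          refine Finset.prod_le_prod (fun i _ => by positivity) (fun i _ => ?_)
          apply one_div_le_one_div_of_le (by positivity)
          push_cast; linarith [Nat.cast_nonneg (α := ℝ) (r i)]
      _ = ((1:ℝ) / (k + 1)) ^ 5 := by simp [Finset.prod_const]

theorem integral_eq_tsum (r : Fin 5 → ℕ) :
    (∫ x in (Set.univ.pi fun _ : Fin 5 => Set.Icc (0:ℝ) 1),
        (∏ i, x i ^ r i) / (1 - ∏ i, x i)) =
      ∑' k : ℕ, 1 / ∏ i, ((k : ℝ) + r i + 1) := by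
  set B := Set.univ.pi fun _ : Fin 5 => Set.Icc (0:ℝ) 1 with hB
  have hmeas : MeasurableSet B := MeasurableSet.univ_pi fun _ => measurableSet_Icc
  have hcpt : IsCompact B := isCompact_univ_pi fun _ => isCompact_Icc
  set f : ℕ → (Fin 5 → ℝ) → ℝ := fun k x => ∏ i, x i ^ (r i + k) with hf
  have hcont : ∀ k, Continuous (f k) := fun k =>
    continuous_finset_prod _ fun i _ => (continuous_apply i).pow _
  -- a.e. equality with the series
  have h0 : (volume : Measure (Fin 5 → ℝ)) {x | x 0 = 1} = 0 := by
    rw [volume_pi]; exact Measure.pi_hyperplane _ 0 1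
  have h0' : ∀ᵐ x : Fin 5 → ℝ, x 0 ≠ 1 := by
    rw [ae_iff]; simpa using h0
  have hae : ∀ᵐ x ∂(volume.restrict B),
      (∏ i, x i ^ r i) / (1 - ∏ i, x i) = ∑' k, f k x := by
    filter_upwards [ae_restrict_mem hmeas, ae_restrict_of_ae h0'] with x hx hx0
    have hxi : ∀ i, x i ∈ Set.Icc (0:ℝ) 1 := fun i => hx i (Set.mem_univ i)
    have ht0 : 0 ≤ ∏ i, x i := Finset.prod_nonneg fun i _ => (hxi i).1
    have ht1 : ∏ i, x i < 1 := by
      have hle : ∏ i, x i ≤ x 0 := by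
        rw [← Finset.mul_prod_erase Finset.univ x (Finset.mem_univ 0)]
        have hp : ∏ i ∈ Finset.univ.erase 0, x i ≤ 1 :=
          Finset.prod_le_one (fun i _ => (hxi i).1) (fun i _ => (hxi i).2)
        nlinarith [(hxi 0).1]
      exact lt_of_le_of_lt hle (lt_of_le_of_ne (hxi 0).2 hx0)
    rw [div_eq_mul_inv, ← tsum_geometric_of_lt_one ht0 ht1, ← tsum_mul_left]
    refine tsum_congr fun k => ?_
    rw [hf]
    simp only [← Finset.prod_pow_eq_pow_sum]
    rw [← Finset.prod_pow (s := Finset.univ) (f := x) (n := k), ← Finset.prod_mul_distrib]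
    exact Finset.prod_congr rfl fun i _ => (pow_add _ _ _).symm
  rw [integral_congr_ae hae]
  -- integrability of each term
  have hint : ∀ k, Integrable (f k) (volume.restrict B) := fun k =>
    ((hcont k).continuousOn (s := B)).integrableOn_compact hcpt
  have hnn : ∀ k, 0 ≤ᵐ[volume.restrict B] f k := by
    intro k
    filter_upwards [ae_restrict_mem hmeas] with x hx
    exact Finset.prod_nonneg fun i _ => pow_nonneg (hx i (Set.mem_univ i)).1 _
  have hval : ∀ k, ∫ x, f k x ∂(volume.restrict B) = ∏ i, (1:ℝ) / ((r i + k : ℕ) + 1) := by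
    intro k; exact box_int fun i => r i + k
  have hsum := summable_aux r
  -- swap
  rw [integral_tsum (fun k => (hcont k).aestronglyMeasurable) ?_]
  · refine tsum_congr fun k => ?_
    rw [hval k, one_div, ← Finset.prod_inv_distrib]
    refine Finset.prod_congr rfl fun i _ => ?_
    rw [one_div]; push_cast; ring_nf
  · have : ∀ k, ∫⁻ x, ‖f k x‖ₑ ∂(volume.restrict B)
        = ENNReal.ofReal (∏ i, (1:ℝ) / ((r i + k : ℕ) + 1)) := by
      intro k
      rw [← hval k]
      rw [show (∫⁻ x, ‖f k x‖ₑ ∂(volume.restrict B)) = ∫⁻ x, ENNReal.ofReal (f k x) ∂(volume.restrict B)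
        from lintegral_congr_ae (by filter_upwards [hnn k] with x hx
                                    rw [← Real.enorm_eq_ofReal hx])]
      rw [← ofReal_integral_eq_lintegral_ofReal (hint k) (hnn k)]
    simp_rw [this]
    rw [← ENNReal.ofReal_tsum_of_nonneg (fun k => Finset.prod_nonneg fun i _ => by positivity) hsum]
    exact ENNReal.ofReal_ne_top
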